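/- arXiv:2311.08911 — 8 statements merged into one kernel-verified Lean document; each statement's English description precedes it below -/
import Mathlib

section
/- For all natural numbers n and m with n ≥ 1 and m ≤ n − 1, the following identity of real numbers holds: Σ_{t=0}^{m} binom(m,t) · t! · (n−1−t)! / n! = 1/(n−m). -/
open Finset

/-- For `n ≥ 1` and `m ≤ n − 1`, the total Shapley coefficient weight of all
subsets of a fixed `m`-element set in an `n`-player game equals `1/(n−m)`:
`Σ_{t=0}^{m} C(m,t)·t!·(n−1−t)!/n! = 1/(n−m)`. -/
theorem shapley_coeff_sum (n m : ℕ) (hn : 1 ≤ n) (hm : m ≤ n - 1) :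
    ∑ t ∈ Finset.range (m + 1),
      ((m.choose t : ℝ) * (t.factorial : ℝ) * ((n - 1 - t).factorial : ℝ))
        / (n.factorial : ℝ)
      = 1 / ((n : ℝ) - (m : ℝ)) := by
  have hmn : m < n := by omega
  set f : ℕ → ℝ := fun t => if t ≤ m then
      (m.factorial : ℝ) * ((n - t).factorial : ℝ) /
        (((m - t).factorial : ℝ) * (n.factorial : ℝ) * ((n : ℝ) - (m : ℝ))) else 0
    with hf
  have hnm : (0:ℝ) < (n:ℝ) - (m:ℝ) := by
    have : (m:ℝ) < (n:ℝ) := by exact_mod_cast hmn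
    linarith
  have hnm0 : (n:ℝ) - (m:ℝ) ≠ 0 := ne_of_gt hnm
  have hnfac : (n.factorial : ℝ) ≠ 0 := by positivity
  have key : ∀ t ∈ Finset.range (m+1),
      ((m.choose t : ℝ) * (t.factorial : ℝ) * ((n - 1 - t).factorial : ℝ))
        / (n.factorial : ℝ) = f t - f (t+1) := by
    intro t ht
    simp only [Finset.mem_range] at ht
    have htm : t ≤ m := by omega
    have hc : (m.choose t : ℝ) * (t.factorial : ℝ) * ((m - t).factorial : ℝ)
        = (m.factorial : ℝ) := by
      exact_mod_cast congrArg (Nat.cast : ℕ → ℝ)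
        (Nat.choose_mul_factorial_mul_factorial htm)
    rcases eq_or_lt_of_le htm with heq | hlt
    · -- t = m
      have h1 : ¬ (t + 1 ≤ m) := by omega
      have h2 : m - t = 0 := by omega
      have h3 : n - t = (n - 1 - t) + 1 := by omega
      simp only [hf, if_pos htm, if_neg h1, h2, h3, Nat.factorial_succ,
        Nat.factorial_zero, Nat.cast_one, one_mul, sub_zero]
      have hcc : m.choose t = 1 := by rw [heq]; exact Nat.choose_self m
      have hcast : ((n - 1 - t : ℕ) : ℝ) + 1 = (n:ℝ) - (m:ℝ) := by
        have e1 : ((n - 1 - t : ℕ) : ℝ) = (n:ℝ) - 1 - (t:ℝ) := by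
          have : ((n - 1 - t : ℕ) : ℝ) = ((n - 1 : ℕ) : ℝ) - (t:ℝ) :=
            Nat.cast_sub (by omega)
          rw [this, Nat.cast_sub (by omega : 1 ≤ n)]; simp
        have e2 : (t:ℝ) = (m:ℝ) := by exact_mod_cast congrArg Nat.cast heq
        rw [e1, e2]; ring
      rw [show ((m.choose t : ℝ)) = 1 by exact_mod_cast hcc]
      rw [show ((t.factorial : ℕ) : ℝ) = (m.factorial : ℝ) by rw [heq]]
      push_cast
      rw [hcast]
      field_simp
    · -- t < m
      obtain ⟨a, rfl⟩ : ∃ a, n = a + t + 1 := ⟨n - t - 1, by omega⟩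
      obtain ⟨b, rfl⟩ : ∃ b, m = b + t + 1 := ⟨m - t - 1, by omega⟩
      have e1 : a + t + 1 - t = a + 1 := by omega
      have e2 : b + t + 1 - t = b + 1 := by omega
      have e3 : a + t + 1 - 1 - t = a := by omega
      have e4 : b + t + 1 - (t + 1) = b := by omega
      have e5 : a + t + 1 - (t + 1) = a := by omega
      have h1 : t + 1 ≤ b + t + 1 := by omega
      simp only [hf, if_pos htm, if_pos h1, e1, e2, e3, e4, e5]
      rw [Nat.factorial_succ a, Nat.factorial_succ b]
      rw [e2, Nat.factorial_succ] at hc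
      have hD : ((a + t + 1 : ℕ):ℝ) - ((b + t + 1 : ℕ):ℝ) = (a:ℝ) - (b:ℝ) := by
        push_cast; ring
      rw [hD]
      have hab : b < a := by omega
      have hab0 : (a:ℝ) - (b:ℝ) ≠ 0 := by
        have : (b:ℝ) < (a:ℝ) := by exact_mod_cast hab
        linarith
      have hbfac : ((b.factorial : ℕ) : ℝ) ≠ 0 := by positivity
      have hNfac : (((a + t + 1).factorial : ℕ) : ℝ) ≠ 0 := by positivity
      rw [← hc]
      push_cast
      field_simp
      ring
  rw [Finset.sum_congr rfl key, Finset.sum_range_sub' f (m+1)]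
  have h0 : f 0 = 1 / ((n:ℝ) - (m:ℝ)) := by
    simp only [hf, if_pos (Nat.zero_le m), Nat.sub_zero]
    field_simp
  have hmp1 : f (m+1) = 0 := by
    simp only [hf, if_neg (by omega : ¬ (m + 1 ≤ m))]
  rw [h0, hmp1, sub_zero]
end

section
/- Let N be a nonempty finite set of players, let b be a player not in N, and let v be a characteristic function assigning a real number to every subset of N ∪ {b}. If b is a null player, i.e. v(S ∪ {b}) = v(S) for every S ⊆ N, then for every i ∈ N the Shapley value of i in the game on N ∪ {b} equals the Shapley value of i in the game on N with v restricted to subsets of N: φ_i(N∪{b}, v) = φ_i(N, v|_N). -/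
open Finset

/-- The Shapley value of player `i` in the game `(N, v)`:
`φ_i(N,v) = Σ_{S ⊆ N\{i}} [|S|!·(|N|−|S|−1)!/|N|!]·(v(S∪{i}) − v(S))`. -/
noncomputable def shapley {α : Type*} [DecidableEq α]
    (N : Finset α) (v : Finset α → ℝ) (i : α) : ℝ :=
  ∑ S ∈ (N.erase i).powerset,
    ((S.card.factorial * (N.card - S.card - 1).factorial : ℝ) / (N.card.factorial : ℝ))
      * (v (insert i S) - v S)

/-- Adding a null player `b` (one with `v(S ∪ {b}) = v(S)` for all `S ⊆ N`)
does not change the Shapley value of any other player.  (Since the Shapley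
value on `N` only evaluates `v` on subsets of `N`, using `v` itself in the
right-hand side is the same as using the restriction of `v` to subsets of
`N`.) -/
theorem shapley_null_player (α : Type*) [DecidableEq α]
    (N : Finset α) (hN : N.Nonempty) (b : α) (hb : b ∉ N)
    (v : Finset α → ℝ)
    (hnull : ∀ S ⊆ N, v (insert b S) = v S) :
    ∀ i ∈ N, shapley (insert b N) v i = shapley N v i := by
  intro i hi
  have hib : i ≠ b := fun h => hb (h ▸ hi)
  have hbe : b ∉ N.erase i := fun h => hb (mem_of_mem_erase h)
  have h1 : (insert b N).erase i = insert b (N.erase i) :=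
    Finset.erase_insert_of_ne hib.symm
  have hcard : (insert b N).card = N.card + 1 := card_insert_of_notMem hb
  unfold shapley
  rw [h1, hcard, powerset_insert, sum_union, sum_image]
  · rw [← sum_add_distrib]
    apply sum_congr rfl
    intro S hS
    have hSsub : S ⊆ N.erase i := mem_powerset.mp hS
    have hSN : S ⊆ N := hSsub.trans (erase_subset _ _)
    have hbS : b ∉ S := fun h => hbe (hSsub h)
    have hiS : insert i S ⊆ N := insert_subset hi hSN
    have hcardS : (insert b S).card = S.card + 1 := card_insert_of_notMem hbS
    have hcomm : insert i (insert b S) = insert b (insert i S) := Finset.insert_comm i b S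
    rw [hcomm, hnull _ hiS, hnull _ hSN, hcardS]
    have ht1 : S.card + 1 ≤ N.card := by
      have := card_le_card hiS
      have : (insert i S).card = S.card + 1 :=
        card_insert_of_notMem (fun h => (mem_erase.mp (hSsub h)).1 rfl)
      omega
    obtain ⟨k, hk⟩ : ∃ k, N.card = S.card + 1 + k := Nat.exists_eq_add_of_le ht1
    rw [hk]
    have e1 : S.card + 1 + k + 1 - S.card - 1 = k + 1 := by omega
    have e2 : S.card + 1 + k + 1 - (S.card + 1) - 1 = k := by omega
    have e3 : S.card + 1 + k - S.card - 1 = k := by omega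
    rw [e1, e2, e3]
    have hf1 : (k + 1).factorial = (k + 1) * k.factorial := Nat.factorial_succ k
    have hf2 : (S.card + 1).factorial = (S.card + 1) * S.card.factorial :=
      Nat.factorial_succ _
    have hf3 : (S.card + 1 + k + 1).factorial
        = (S.card + 1 + k + 1) * (S.card + 1 + k).factorial := Nat.factorial_succ _
    rw [hf1, hf2, hf3]
    have h0 : ((S.card + 1 + k).factorial : ℝ) ≠ 0 := by
      exact_mod_cast (Nat.factorial_pos _).ne'
    push_cast
    field_simp
    ring
  · intro S hS T hT h
    have hbS : b ∉ S := fun hx => hbe (mem_powerset.mp hS hx)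
    have hbT : b ∉ T := fun hx => hbe (mem_powerset.mp hT hx)
    have := congrArg (Finset.erase · b) h
    simpa [erase_insert, hbS, hbT] using this
  · simp only [disjoint_left, mem_powerset, mem_image]
    rintro S hS ⟨T, hT, rfl⟩
    exact (fun h => hbe (hS h)) (mem_insert_self b T)
end

section
/- Consider n ≥ 1 nodes labelled 1,…,n on a line starting at a source s, with nonnegative real edge costs c_1,…,c_n, where c_1 is the cost of the edge from s to node 1 and, for 2 ≤ j ≤ n, c_j is the cost of the edge from node j−1 to node j. Define the characteristic function v on subsets of {1,…,n} by v(∅) = 0 and v(S) = Σ_{j=1}^{max S} c_j for nonempty S (the cost of the path from s to the farthest node of S). Then for every i ∈ {1,…,n}, the Shapley value of node i equals φ_i = Σ_{j=1}^{i} c_j/(n − j + 1). Equivalently, the Shapley cost share of node i coincides with the Claus–Kleitman rule in which the cost of each edge on the line is shared equally among all nodes that use it to connect to the source. -/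
open Finset

/-- The characteristic function of the line (path) graph: `v(∅) = 0` and, for a
nonempty coalition `S ⊆ {1,…,n}`, `v(S) = Σ_{j=1}^{max S} c_j`, the cost of the
path from the source to the farthest node of `S`. -/
noncomputable def lineGame (c : ℕ → ℝ) (S : Finset ℕ) : ℝ :=
  if h : S.Nonempty then ∑ j ∈ Finset.Icc 1 (S.max' h), c j else 0

/-- Key combinatorial identity (via the hockey-stick identity):
`(u+1) · Σ_{k=0}^{M} C(M,k)·k!·(M+u−k)! = (M+u+1)!`. -/
lemma shapley_nat_key (M u : ℕ) :
    (u + 1) * ∑ k ∈ range (M + 1), M.choose k * (k.factorial * (M + u - k).factorial)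
      = (M + u + 1).factorial := by
  have h1 : ∀ k ∈ range (M + 1),
      M.choose k * (k.factorial * (M + u - k).factorial)
        = (u + (M - k)).choose u * (u.factorial * M.factorial) := by
    intro k hk
    rw [mem_range, Nat.lt_succ_iff] at hk
    have e1 : M + u - k = u + (M - k) := by omega
    have e2 : (u + (M - k)).choose u * u.factorial * (M - k).factorial
        = (u + (M - k)).factorial := by
      have := Nat.choose_mul_factorial_mul_factorial (Nat.le_add_right u (M - k))
      simpa using this
    have e3 : M.choose k * k.factorial * (M - k).factorial = M.factorial :=
      Nat.choose_mul_factorial_mul_factorial hk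
    calc M.choose k * (k.factorial * (M + u - k).factorial)
        = M.choose k * k.factorial * (u + (M - k)).factorial := by rw [e1]; ring
      _ = M.choose k * k.factorial * ((u + (M - k)).choose u * u.factorial * (M - k).factorial) := by
          rw [e2]
      _ = (u + (M - k)).choose u * u.factorial * (M.choose k * k.factorial * (M - k).factorial) := by
          ring
      _ = (u + (M - k)).choose u * (u.factorial * M.factorial) := by rw [e3]; ring
  rw [Finset.sum_congr rfl h1, ← Finset.sum_mul]
  have h2 : ∑ k ∈ range (M + 1), (u + (M - k)).choose u
      = ∑ k ∈ range (M + 1), (u + k).choose u := by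
    have := Finset.sum_range_reflect (fun k => (u + k).choose u) (M + 1)
    simpa [Nat.succ_sub_succ] using this
  have h3 : ∑ k ∈ range (M + 1), (u + k).choose u = (u + M + 1).choose (u + 1) := by
    rw [← Nat.sum_Icc_choose, ← Finset.Ico_add_one_right_eq_Icc, Finset.sum_Ico_eq_sum_range]
    have : u + M + 1 - u = M + 1 := by omega
    rw [this]
  rw [h2, h3]
  have h4 := Nat.choose_mul_factorial_mul_factorial
    (show u + 1 ≤ u + M + 1 by omega)
  have e : u + M + 1 - (u + 1) = M := by omega
  rw [e] at h4
  have : (u + 1).factorial = (u + 1) * u.factorial := rfl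
  calc (u + 1) * ((u + M + 1).choose (u + 1) * (u.factorial * M.factorial))
      = (u + M + 1).choose (u + 1) * ((u + 1) * u.factorial) * M.factorial := by ring
    _ = (u + M + 1).choose (u + 1) * (u + 1).factorial * M.factorial := by rw [← this]
    _ = (u + M + 1).factorial := h4
    _ = (M + u + 1).factorial := by rw [Nat.add_comm u M]

/-- Summing the Shapley weights over all subsets of a set `A` with
`n = |A| + u + 1` gives `1/(u+1)`. -/
lemma shapley_real_key {α : Type*} [DecidableEq α] (A : Finset α) (u n : ℕ)
    (hn : n = A.card + u + 1) :
    ∑ S ∈ A.powerset, ((S.card.factorial * (n - S.card - 1).factorial : ℝ)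
        / (n.factorial : ℝ)) = 1 / (u + 1) := by
  set M := A.card with hM
  have h0 : ∑ S ∈ A.powerset,
      ((S.card.factorial * (n - S.card - 1).factorial : ℝ) / (n.factorial : ℝ))
      = ∑ k ∈ range (M + 1), M.choose k •
          ((k.factorial * (n - k - 1).factorial : ℝ) / (n.factorial : ℝ)) :=
    Finset.sum_powerset_apply_card
      (fun m => ((m.factorial * (n - m - 1).factorial : ℝ) / (n.factorial : ℝ)))
  rw [h0]
  have h1 : ∀ k ∈ range (M + 1), (M.choose k : ℕ) •
      ((k.factorial * (n - k - 1).factorial : ℝ) / (n.factorial : ℝ))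
      = ((M.choose k * (k.factorial * (M + u - k).factorial) : ℕ) : ℝ) / (n.factorial : ℝ) := by
    intro k hk
    rw [mem_range, Nat.lt_succ_iff] at hk
    have e : n - k - 1 = M + u - k := by omega
    rw [e, nsmul_eq_mul]
    push_cast
    ring
  rw [Finset.sum_congr rfl h1, ← Finset.sum_div, ← Nat.cast_sum]
  have h2 := shapley_nat_key M u
  have hfac : ((n.factorial : ℝ)) ≠ 0 := Nat.cast_ne_zero.mpr (Nat.factorial_ne_zero n)
  have hu : ((u : ℝ) + 1) ≠ 0 := by positivity
  have h3 : ((u : ℝ) + 1) *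
      ((∑ k ∈ range (M + 1), M.choose k * (k.factorial * (M + u - k).factorial) : ℕ) : ℝ)
      = (n.factorial : ℝ) := by
    rw [hn]
    exact_mod_cast congrArg (Nat.cast : ℕ → ℝ) h2
  rw [div_eq_div_iff hfac hu]
  push_cast at h3 ⊢
  linarith [h3]

/-- The marginal contribution of node `i` to a coalition `S` not containing it. -/
lemma lineGame_marginal (c : ℕ → ℝ) (i : ℕ) (S : Finset ℕ) (hiS : i ∉ S) :
    lineGame c (insert i S) - lineGame c S
      = ∑ j ∈ Finset.Icc 1 i, (if ∀ s ∈ S, s < j then c j else 0) := by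
  rcases S.eq_empty_or_nonempty with rfl | h
  · simp [lineGame]
  · have hne : (insert i S).Nonempty := insert_nonempty _ _
    set m := S.max' h with hm
    have hmax : (insert i S).max' hne = max (S.max' h) i := (Finset.max'_insert i S h).trans (max_comm _ _)
    have hmem : m ∈ S := S.max'_mem h
    have hlG : lineGame c S = ∑ j ∈ Finset.Icc 1 m, c j := by rw [lineGame, dif_pos h]
    have hlG2 : lineGame c (insert i S) = ∑ j ∈ Finset.Icc 1 (max m i), c j := by
      rw [lineGame, dif_pos hne, hmax]
    rcases lt_or_gt_of_ne (show i ≠ m from fun e => hiS (e ▸ hmem)) with hlt | hgt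
    · -- i < m : marginal contribution is 0
      rw [hlG, hlG2, max_eq_left hlt.le, sub_self]
      refine (Finset.sum_eq_zero fun j hj => ?_).symm
      rw [mem_Icc] at hj
      rw [if_neg]
      push_neg
      exact ⟨m, hmem, by omega⟩
    · -- m < i
      rw [hlG, hlG2, max_eq_right hgt.le]
      have hiff : ∀ j ∈ Finset.Icc 1 i,
          (if ∀ s ∈ S, s < j then c j else 0) = (if m < j then c j else 0) := by
        intro j hj
        congr 1
        simp only [eq_iff_iff]
        constructor
        · intro hall; exact hall m hmem
        · intro hmj s hs; exact lt_of_le_of_lt (S.le_max' s hs) hmj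
      rw [Finset.sum_congr rfl hiff, Finset.sum_ite, Finset.sum_const, smul_zero, add_zero]
      have hfil : (Finset.Icc 1 i).filter (fun j => m < j) = Finset.Icc (m + 1) i := by
        ext x
        simp only [mem_filter, mem_Icc]
        omega
      rw [hfil]
      have hsplit : ∑ j ∈ Finset.Icc 1 m, c j + ∑ j ∈ Finset.Icc (m + 1) i, c j
          = ∑ j ∈ Finset.Icc 1 i, c j := by
        rw [show Finset.Icc (m + 1) i = Finset.Ioc m i from Finset.Icc_add_one_left_eq_Ioc _ _,
          show Finset.Icc 1 m = Finset.Ioc 0 m from Finset.Icc_add_one_left_eq_Ioc _ _,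
          show Finset.Icc 1 i = Finset.Ioc 0 i from Finset.Icc_add_one_left_eq_Ioc _ _]
        exact Finset.sum_Ioc_consecutive _ (Nat.zero_le m) (by omega)
      linarith [hsplit]

/-- On a line of `n` nodes with nonnegative edge costs `c_1,…,c_n` (node `j`
joined to node `j−1`, node `1` joined to the source), the Shapley value of
node `i` equals `Σ_{j=1}^{i} c_j/(n − j + 1)`, i.e. it coincides with the
Claus–Kleitman rule where each edge cost is shared equally among the nodes
using that edge to connect to the source. -/
theorem shapley_line_eq_clausKleitman (n : ℕ) (hn : 1 ≤ n) (c : ℕ → ℝ)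
    (hc : ∀ j ∈ Finset.Icc 1 n, 0 ≤ c j) :
    ∀ i ∈ Finset.Icc 1 n,
      shapley (Finset.Icc 1 n) (lineGame c) i
        = ∑ j ∈ Finset.Icc 1 i, c j / ((n : ℝ) - (j : ℝ) + 1) := by
  intro i hi
  rw [mem_Icc] at hi
  obtain ⟨hi1, hi2⟩ := hi
  have hcard : (Finset.Icc 1 n).card = n := by rw [Nat.card_Icc]; omega
  rw [shapley, hcard]
  calc
    ∑ S ∈ ((Finset.Icc 1 n).erase i).powerset,
        ((S.card.factorial * (n - S.card - 1).factorial : ℝ) / (n.factorial : ℝ))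
          * (lineGame c (insert i S) - lineGame c S)
      = ∑ S ∈ ((Finset.Icc 1 n).erase i).powerset, ∑ j ∈ Finset.Icc 1 i,
          (if ∀ s ∈ S, s < j then
            ((S.card.factorial * (n - S.card - 1).factorial : ℝ) / (n.factorial : ℝ)) * c j
          else 0) := by
        refine Finset.sum_congr rfl fun S hS => ?_
        rw [mem_powerset] at hS
        have hiS : i ∉ S := fun hmem => (Finset.mem_erase.mp (hS hmem)).1 rfl
        rw [lineGame_marginal c i S hiS, Finset.mul_sum]
        exact Finset.sum_congr rfl fun j _ => by rw [mul_ite, mul_zero]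
    _ = ∑ j ∈ Finset.Icc 1 i, ∑ S ∈ ((Finset.Icc 1 n).erase i).powerset,
          (if ∀ s ∈ S, s < j then
            ((S.card.factorial * (n - S.card - 1).factorial : ℝ) / (n.factorial : ℝ)) * c j
          else 0) := Finset.sum_comm
    _ = ∑ j ∈ Finset.Icc 1 i, c j / ((n : ℝ) - (j : ℝ) + 1) := by
        refine Finset.sum_congr rfl fun j hj => ?_
        rw [mem_Icc] at hj
        obtain ⟨hj1, hj2⟩ := hj
        rw [← Finset.sum_filter]
        have hps : (((Finset.Icc 1 n).erase i).powerset).filter (fun S => ∀ s ∈ S, s < j)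
            = (Finset.Icc 1 (j - 1)).powerset := by
          ext S
          simp only [mem_filter, mem_powerset, Finset.subset_iff, mem_erase, mem_Icc]
          constructor
          · rintro ⟨h1, h2⟩ x hx
            have h3 := h1 hx
            have h4 := h2 x hx
            omega
          · intro h1
            constructor
            · intro x hx
              have := h1 hx
              constructor <;> omega
            · intro x hx
              have := h1 hx
              omega
        rw [hps, ← Finset.sum_mul]
        have hA : (Finset.Icc 1 (j - 1)).card = j - 1 := by rw [Nat.card_Icc]; omega
        rw [shapley_real_key (Finset.Icc 1 (j - 1)) (n - j) n (by rw [hA]; omega)]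
        have hcast : ((n - j : ℕ) : ℝ) = (n : ℝ) - (j : ℝ) := by
          rw [Nat.cast_sub (by omega)]
        rw [hcast]
        ring
end

section
/- Consider a rooted tree with source node 0 and nodes 1,…,n, encoded by a parent function p : {1,…,n} → {0,1,…,n−1} satisfying p(i) < i for all i, where the edge joining node i to its parent p(i) has nonnegative real cost c_i. For each node i, let A(i) = {i, p(i), p(p(i)),…} \ {0} be the set of nodes on the path from i to the source (including i, excluding the source). Define the characteristic function v on subsets S of {1,…,n} by v(S) = Σ_{j ∈ ∪_{i∈S} A(i)} c_j, the total cost of the edges on the union of the paths connecting the nodes of S to the source, and v(∅)=0. Then for every node i, the Shapley value of i equals φ_i = Σ_{j ∈ A(i)} c_j / |{k ∈ {1,…,n} : j ∈ A(k)}|, i.e. the Shapley cost share of each node coincides with the Claus–Kleitman rule in which the cost of each tree edge is shared equally among all nodes whose path to the source uses that edge. -/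
open Finset

lemma key_nat (n m : ℕ) (h : m < n) :
    (n - m) * ∑ s ∈ range (m+1), m.choose s * (s.factorial * (n - s - 1).factorial)
      = n.factorial := by
  have hstep : ∀ s ∈ range (m+1),
      m.choose s * (s.factorial * (n - s - 1).factorial)
        = m.factorial * (n - m - 1).factorial * (n - s - 1).choose (n - m - 1) := by
    intro s hs
    have hsm : s ≤ m := by simp [Finset.mem_range] at hs; omega
    have h1 : m.choose s * s.factorial * (m - s).factorial = m.factorial :=
      Nat.choose_mul_factorial_mul_factorial hsm
    have h2 : (n - s - 1).choose (n - m - 1) * (n - m - 1).factorial * (m - s).factorial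
        = (n - s - 1).factorial := by
      have := Nat.choose_mul_factorial_mul_factorial
        (show n - m - 1 ≤ n - s - 1 by omega)
      rwa [show n - s - 1 - (n - m - 1) = m - s by omega] at this
    apply Nat.eq_of_mul_eq_mul_right (Nat.factorial_pos (m - s))
    calc m.choose s * (s.factorial * (n - s - 1).factorial) * (m - s).factorial
        = (m.choose s * s.factorial * (m - s).factorial) * (n - s - 1).factorial := by ring
      _ = m.factorial * ((n - s - 1).choose (n - m - 1) * (n - m - 1).factorial
            * (m - s).factorial) := by rw [h1, h2]
      _ = m.factorial * (n - m - 1).factorial * (n - s - 1).choose (n - m - 1)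
            * (m - s).factorial := by ring
  rw [Finset.sum_congr rfl hstep, ← Finset.mul_sum]
  have hre : ∑ s ∈ range (m+1), (n - s - 1).choose (n - m - 1)
      = ∑ j ∈ Icc (n - m - 1) (n - 1), j.choose (n - m - 1) := by
    apply Finset.sum_nbij' (fun s => n - s - 1) (fun j => n - j - 1)
    · intro s hs; simp only [Finset.mem_range] at hs; simp only [Finset.mem_Icc]; omega
    · intro j hj; simp only [Finset.mem_Icc] at hj; simp only [Finset.mem_range]; omega
    · intro s hs; simp only [Finset.mem_range] at hs; omega
    · intro j hj; simp only [Finset.mem_Icc] at hj; omega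
    · intro s hs; rfl
  rw [hre, Nat.sum_Icc_choose, show n - 1 + 1 = n by omega, show n - m - 1 + 1 = n - m by omega]
  have h3 : n.choose (n - m) * (n - m).factorial * m.factorial = n.factorial := by
    have := Nat.choose_mul_factorial_mul_factorial (show n - m ≤ n by omega)
    rwa [show n - (n - m) = m by omega] at this
  have h4 : (n - m) * (n - m - 1).factorial = (n - m).factorial := by
    rw [show n - m = (n - m - 1) + 1 by omega, Nat.factorial_succ]
    congr 1 <;> omega
  calc (n - m) * (m.factorial * (n - m - 1).factorial * n.choose (n - m))
      = ((n - m) * (n - m - 1).factorial) * m.factorial * n.choose (n - m) := by ring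
    _ = n.choose (n - m) * (n - m).factorial * m.factorial := by rw [h4]; ring
    _ = n.factorial := h3


lemma sum_coef (N M : Finset ℕ) (hlt : M.card < N.card) :
    ∑ S ∈ M.powerset,
        ((S.card.factorial * (N.card - S.card - 1).factorial : ℝ) / (N.card.factorial : ℝ))
      = 1 / ((N.card - M.card : ℕ) : ℝ) := by
  set n := N.card with hn
  set m := M.card with hm
  rw [powerset_card_disjiUnion]; erw [sum_disjiUnion]
  have hstep : ∀ k ∈ range (m+1),
      ∑ S ∈ M.powersetCard k,
          ((S.card.factorial * (n - S.card - 1).factorial : ℝ) / (n.factorial : ℝ))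
        = (m.choose k : ℝ) * ((k.factorial * (n - k - 1).factorial : ℝ) / (n.factorial : ℝ)) := by
    intro k hk
    rw [Finset.sum_congr rfl (fun S hS => by
      rw [(Finset.mem_powersetCard.mp hS).2]), Finset.sum_const, Finset.card_powersetCard,
      nsmul_eq_mul]
  rw [Finset.sum_congr rfl hstep]
  have key := key_nat n m hlt
  have hkey : ((n - m : ℕ) : ℝ) *
      ∑ k ∈ range (m+1), (m.choose k : ℝ) * (k.factorial * (n - k - 1).factorial : ℝ)
        = (n.factorial : ℝ) := by
    rw [← key]; push_cast [Finset.mul_sum]; ring_nf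
  have hnm : ((n - m : ℕ) : ℝ) ≠ 0 := by
    have : 0 < n - m := by omega
    positivity
  have hnf : (n.factorial : ℝ) ≠ 0 := by positivity
  rw [eq_div_iff hnm]
  rw [Finset.sum_mul]
  calc (∑ k ∈ range (m+1),
          (m.choose k : ℝ) * ((k.factorial * (n - k - 1).factorial : ℝ) / (n.factorial : ℝ))
            * ((n - m : ℕ) : ℝ))
      = (((n - m : ℕ) : ℝ) *
          ∑ k ∈ range (m+1), (m.choose k : ℝ) * (k.factorial * (n - k - 1).factorial : ℝ))
          / (n.factorial : ℝ) := by
        rw [Finset.mul_sum, Finset.sum_div]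
        apply Finset.sum_congr rfl; intro k hk; field_simp
    _ = 1 := by rw [hkey]; field_simp

/-- On a rooted tree with source `0` and nodes `1,…,n`, parent map `p` with
`p i < i`, edge costs `c i ≥ 0` (edge from `i` to `p i`), ancestor sets
`A i = {i, p i, p (p i), …} \ {0}` (characterized by `A 0 = ∅` and
`A i = insert i (A (p i))` for `1 ≤ i ≤ n`), and characteristic function
`v S = Σ_{j ∈ ⋃_{i∈S} A i} c j` (so that `v ∅ = 0`), the Shapley value of each
node `i` equals `Σ_{j ∈ A i} c j / |{k ∈ {1,…,n} : j ∈ A k}|`: each tree edge's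
cost is shared equally among all nodes whose path to the source uses it
(the Claus–Kleitman rule). -/
theorem shapley_tree_eq_clausKleitman (n : ℕ) (hn : 1 ≤ n)
    (p : ℕ → ℕ) (hp : ∀ i ∈ Finset.Icc 1 n, p i < i)
    (c : ℕ → ℝ) (hc : ∀ j ∈ Finset.Icc 1 n, 0 ≤ c j)
    (A : ℕ → Finset ℕ)
    (hA0 : A 0 = ∅)
    (hA : ∀ i ∈ Finset.Icc 1 n, A i = insert i (A (p i)))
    (v : Finset ℕ → ℝ)
    (hv : ∀ S ⊆ Finset.Icc 1 n, v S = ∑ j ∈ S.biUnion A, c j) :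
    ∀ i ∈ Finset.Icc 1 n,
      shapley (Finset.Icc 1 n) v i
        = ∑ j ∈ A i,
            c j / (((Finset.Icc 1 n).filter (fun k => j ∈ A k)).card : ℝ) := by
  intro i hi
  have hN : (Finset.Icc 1 n).card = n := by rw [Nat.card_Icc]; omega
  -- ancestor sets lie in Icc 1 n
  have hAsub : ∀ k, k ∈ Finset.Icc 1 n → A k ⊆ Finset.Icc 1 n := by
    intro k
    induction k using Nat.strong_induction_on with
    | _ k ih =>
      intro hk
      rw [hA k hk]
      intro x hx
      rcases Finset.mem_insert.mp hx with rfl | hx'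
      · exact hk
      · rcases Nat.eq_zero_or_pos (p k) with hp0 | hp1
        · rw [hp0, hA0] at hx'; exact absurd hx' (Finset.notMem_empty x)
        · have hpk : p k ∈ Finset.Icc 1 n := by
            simp only [Finset.mem_Icc] at hk ⊢
            exact ⟨hp1, le_trans (le_of_lt (hp k (by simp [Finset.mem_Icc]; omega))) hk.2⟩
          exact ih (p k) (hp k hk) hpk hx'
  have hself : ∀ k ∈ Finset.Icc 1 n, k ∈ A k := by
    intro k hk; rw [hA k hk]; exact Finset.mem_insert_self _ _
  set F : ℕ → Finset ℕ := fun j => (Finset.Icc 1 n).filter (fun k => j ∈ A k) with hF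
  -- rewrite v as a sum of indicator games
  have hvS : ∀ S ⊆ Finset.Icc 1 n,
      v S = ∑ j ∈ Finset.Icc 1 n, (if (S ∩ F j).Nonempty then c j else 0) := by
    intro S hS
    have hsub : S.biUnion A ⊆ Finset.Icc 1 n :=
      Finset.biUnion_subset.mpr fun k hk => hAsub k (hS hk)
    rw [hv S hS, ← Finset.inter_eq_right.mpr hsub, ← Finset.sum_ite_mem]
    apply Finset.sum_congr rfl
    intro j _
    congr 1
    simp only [eq_iff_iff, Finset.mem_biUnion, hF, Finset.Nonempty, Finset.mem_inter,
      Finset.mem_filter]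
    constructor
    · rintro ⟨k, hkS, hjk⟩; exact ⟨k, hkS, hS hkS, hjk⟩
    · rintro ⟨k, hkS, _, hjk⟩; exact ⟨k, hkS, hjk⟩
  -- per-game shapley computation
  unfold shapley
  rw [hN]
  have hstep : ∀ S ∈ ((Finset.Icc 1 n).erase i).powerset,
      ((S.card.factorial * (n - S.card - 1).factorial : ℝ) / (n.factorial : ℝ))
          * (v (insert i S) - v S)
        = ∑ j ∈ Finset.Icc 1 n,
            ((S.card.factorial * (n - S.card - 1).factorial : ℝ) / (n.factorial : ℝ))
              * ((if ((insert i S) ∩ F j).Nonempty then c j else 0)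
                 - (if (S ∩ F j).Nonempty then c j else 0)) := by
    intro S hS
    have hS' : S ⊆ Finset.Icc 1 n :=
      (Finset.mem_powerset.mp hS).trans (Finset.erase_subset _ _)
    have hiS : insert i S ⊆ Finset.Icc 1 n := Finset.insert_subset hi hS'
    rw [hvS S hS', hvS (insert i S) hiS, ← Finset.sum_sub_distrib, Finset.mul_sum]
  rw [Finset.sum_congr rfl hstep, Finset.sum_comm]
  -- inner sum for each j
  have hinner : ∀ j ∈ Finset.Icc 1 n,
      ∑ S ∈ ((Finset.Icc 1 n).erase i).powerset,
          ((S.card.factorial * (n - S.card - 1).factorial : ℝ) / (n.factorial : ℝ))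
            * ((if ((insert i S) ∩ F j).Nonempty then c j else 0)
               - (if (S ∩ F j).Nonempty then c j else 0))
        = if i ∈ F j then c j / ((F j).card : ℝ) else 0 := by
    intro j _
    by_cases hij : i ∈ F j
    · rw [if_pos hij]
      have hterm : ∀ S ∈ ((Finset.Icc 1 n).erase i).powerset,
          ((S.card.factorial * (n - S.card - 1).factorial : ℝ) / (n.factorial : ℝ))
            * ((if ((insert i S) ∩ F j).Nonempty then c j else 0)
               - (if (S ∩ F j).Nonempty then c j else 0))
          = if (S ∩ F j).Nonempty then 0 else
              ((S.card.factorial * (n - S.card - 1).factorial : ℝ) / (n.factorial : ℝ)) * c j := by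
        intro S _
        have h1 : ((insert i S) ∩ F j).Nonempty := ⟨i, Finset.mem_inter.mpr
          ⟨Finset.mem_insert_self _ _, hij⟩⟩
        rw [if_pos h1]
        by_cases h2 : (S ∩ F j).Nonempty
        · rw [if_pos h2, if_pos h2]; ring
        · rw [if_neg h2, if_neg h2]; ring
      rw [Finset.sum_congr rfl hterm, Finset.sum_ite, Finset.sum_const_zero, zero_add]
      have hfilt : ((Finset.Icc 1 n).erase i).powerset.filter (fun S => ¬(S ∩ F j).Nonempty)
          = ((Finset.Icc 1 n) \ F j).powerset := by
        ext S
        simp only [Finset.mem_filter, Finset.mem_powerset, Finset.not_nonempty_iff_eq_empty,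
          ← Finset.disjoint_iff_inter_eq_empty]
        constructor
        · rintro ⟨hSe, hdisj⟩
          intro x hx
          exact Finset.mem_sdiff.mpr ⟨Finset.mem_of_mem_erase (hSe hx),
            fun hxF => Finset.disjoint_left.mp hdisj hx hxF⟩
        · intro hSsub
          constructor
          · intro x hx
            have := hSsub hx
            rw [Finset.mem_sdiff] at this
            apply Finset.mem_erase.mpr
            exact ⟨fun hxi => this.2 (hxi ▸ hij), this.1⟩
          · exact Finset.disjoint_left.mpr fun x hx => (Finset.mem_sdiff.mp (hSsub hx)).2
      rw [hfilt, ← Finset.sum_mul]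
      have hFsub : F j ⊆ Finset.Icc 1 n := Finset.filter_subset _ _
      have hcard : ((Finset.Icc 1 n) \ F j).card = n - (F j).card := by
        rw [Finset.card_sdiff_of_subset hFsub, hN]
      have hFpos : 0 < (F j).card := Finset.card_pos.mpr ⟨i, hij⟩
      have hFle : (F j).card ≤ n := hN ▸ Finset.card_le_card hFsub
      have := sum_coef (Finset.Icc 1 n) ((Finset.Icc 1 n) \ F j)
        (by rw [hN, hcard]; omega)
      rw [hN, hcard] at this
      rw [this, show n - (n - (F j).card) = (F j).card by omega]
      rw [div_mul_eq_mul_div, one_mul]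
    · rw [if_neg hij]
      apply Finset.sum_eq_zero
      intro S _
      have : ((insert i S) ∩ F j).Nonempty ↔ (S ∩ F j).Nonempty := by
        rw [Finset.insert_inter_of_notMem hij]
      by_cases h2 : (S ∩ F j).Nonempty
      · rw [if_pos h2, if_pos (this.mpr h2)]; ring
      · rw [if_neg h2, if_neg (fun h => h2 (this.mp h))]; ring
  rw [Finset.sum_congr rfl hinner]
  rw [Finset.sum_ite, Finset.sum_const_zero, add_zero]
  apply Finset.sum_nbij' (fun j => j) (fun j => j) <;> try (intro j hj; rfl)
  · intro j hj
    simp only [Finset.mem_filter] at hj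
    rw [hF] at hj
    simp only [Finset.mem_filter] at hj
    exact hj.2.2
  · intro j hj
    simp only [Finset.mem_filter]
    refine ⟨hAsub i hi hj, ?_⟩
    rw [hF]; simp only [Finset.mem_filter]
    exact ⟨hi, hj⟩
end

section
/- Let V be a finite set of nodes with source s ∈ V, let w assign a nonnegative real cost to each edge (unordered pair of distinct nodes of V), let i ∈ V \ {s}, and let E' ⊆ E be two finite edge sets such that every edge of E \ E' is incident to i. Then for every S ⊆ V \ {s} with i ∉ S such that S ∪ {i} is connectable within E', the marginal connection costs satisfy C_{E'}(S ∪ {i}) − C_{E'}(S) ≥ C_E(S ∪ {i}) − C_E(S): deleting edges incident to i weakly increases i's marginal cost of connecting to the source on top of any coalition S. -/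
open Finset

/-- The edge set `F` connects every node of `S` to the source `src`:
in the graph with edge set `F`, every node of `S` is reachable from `src`. -/
def Connects {α : Type*} (src : α) (F : Finset (Sym2 α)) (S : Finset α) : Prop :=
  ∀ i ∈ S, (SimpleGraph.fromEdgeSet (↑F : Set (Sym2 α))).Reachable src i

/-- `S` is connectable within the available edge set `E`: some `F ⊆ E`
connects every node of `S` to the source. -/
def Connectable {α : Type*} (src : α) (E : Finset (Sym2 α)) (S : Finset α) : Prop :=
  ∃ F ⊆ E, Connects src F S

/-- The minimum cost `C_E(S)` of connecting `S` to the source `src` using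
edges from `E` with edge costs `w`. -/
noncomputable def connCost {α : Type*} (src : α) (w : Sym2 α → ℝ)
    (E : Finset (Sym2 α)) (S : Finset α) : ℝ :=
  sInf {x : ℝ | ∃ F ⊆ E, Connects src F S ∧ x = ∑ e ∈ F, w e}

lemma connects_mono {α : Type*} {src : α} {F F' : Finset (Sym2 α)} (h : F ⊆ F')
    {S : Finset α} (hc : Connects src F S) : Connects src F' S := fun j hj =>
  (hc j hj).mono (SimpleGraph.fromEdgeSet_mono (by exact_mod_cast h))

/-- key extraction: any connector contains a sub-connector of no larger cost that
either avoids private edges or connects `i`. -/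
lemma key_extract {α : Type*} [DecidableEq α] (src i : α) (E E' : Finset (Sym2 α))
    (hinc : ∀ e ∈ E \ E', i ∈ e) (w : Sym2 α → ℝ) (hw : ∀ e ∈ E, 0 ≤ w e)
    (S : Finset α) (F : Finset (Sym2 α)) :
    F ⊆ E → Connects src F S → ∃ T ⊆ F, Connects src T S ∧
      (∑ e ∈ T, w e) ≤ ∑ e ∈ F, w e ∧
      (T ⊆ E' ∨ (SimpleGraph.fromEdgeSet (↑T : Set (Sym2 α))).Reachable src i) := by
  induction F using Finset.strongInduction with
  | _ F ih =>
    intro hFE hcF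
    by_cases hFE' : F ⊆ E'
    · exact ⟨F, Finset.Subset.refl _, hcF, le_refl _, Or.inl hFE'⟩
    · obtain ⟨e, heF, heE'⟩ := Finset.not_subset.mp hFE'
      have hie : i ∈ e := hinc e (Finset.mem_sdiff.mpr ⟨hFE heF, heE'⟩)
      by_cases hce : Connects src (F.erase e) S
      · obtain ⟨T, hTsub, hcT, hwT, halt⟩ :=
          ih (F.erase e) (Finset.erase_ssubset heF)
            ((F.erase_subset e).trans hFE) hce
        refine ⟨T, hTsub.trans (F.erase_subset e), hcT, hwT.trans ?_, halt⟩
        exact Finset.sum_le_sum_of_subset_of_nonneg (F.erase_subset e)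
          (fun x hx _ => hw x (hFE hx))
      · -- e is needed: some j ∈ S loses reachability without e, so i is on a path
        simp only [Connects, not_forall] at hce
        obtain ⟨j, hjS, hj⟩ := hce
        obtain ⟨p⟩ := hcF j hjS
        refine ⟨F, Finset.Subset.refl _, hcF, le_refl _, Or.inr ?_⟩
        have hep : e ∈ p.edges := by
          by_contra hep
          refine hj ⟨p.transfer _ ?_⟩
          intro e' he'
          have h1 : e' ∈ (SimpleGraph.fromEdgeSet (↑F : Set (Sym2 α))).edgeSet :=
            p.edges_subset_edgeSet he'
          rw [SimpleGraph.edgeSet_fromEdgeSet] at h1 ⊢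
          refine ⟨?_, h1.2⟩
          have : e' ≠ e := fun h => hep (h ▸ he')
          exact_mod_cast Finset.mem_erase.mpr ⟨this, by exact_mod_cast h1.1⟩
        obtain ⟨x, rfl⟩ := Sym2.mem_iff_exists.mp hie
        exact ⟨p.takeUntil i (p.fst_mem_support_of_mem_edges hep)⟩

/-- Deleting edges incident to node `i` weakly increases `i`'s marginal cost of
connecting to the source on top of any coalition `S`: if `E' ⊆ E`, every edge
of `E \ E'` is incident to `i`, `i ∉ S` and `S ∪ {i}` is connectable within
`E'`, then `C_{E'}(S ∪ {i}) − C_{E'}(S) ≥ C_E(S ∪ {i}) − C_E(S)`. -/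
theorem connCost_marginal_antitone (α : Type*) [DecidableEq α]
    (V : Finset α) (src : α) (hsrc : src ∈ V)
    (E E' : Finset (Sym2 α)) (hE'E : E' ⊆ E)
    (hE : ∀ e ∈ E, ¬ e.IsDiag ∧ ∀ x ∈ e, x ∈ V)
    (w : Sym2 α → ℝ) (hw : ∀ e ∈ E, 0 ≤ w e)
    (i : α) (hiV : i ∈ V \ {src})
    (hinc : ∀ e ∈ E \ E', i ∈ e)
    (S : Finset α) (hSV : S ⊆ V \ {src}) (hiS : i ∉ S)
    (hconn : Connectable src E' (insert i S)) :
    connCost src w E (insert i S) - connCost src w E S ≤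
      connCost src w E' (insert i S) - connCost src w E' S := by
  classical
  set cs : Finset (Sym2 α) → Finset α → Set ℝ := fun G X =>
    {x : ℝ | ∃ F ⊆ G, Connects src F X ∧ x = ∑ e ∈ F, w e} with hcs
  have hbdd : ∀ G, G ⊆ E → ∀ X, BddBelow (cs G X) := by
    rintro G hGE X
    refine ⟨0, ?_⟩
    rintro x ⟨F, hFG, _, rfl⟩
    exact Finset.sum_nonneg fun e he => hw e (hGE (hFG he))
  -- nonempty facts
  obtain ⟨F₀, hF₀E', hcF₀⟩ := hconn
  have hne1 : (cs E' (insert i S)).Nonempty := ⟨_, F₀, hF₀E', hcF₀, rfl⟩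
  have hcF₀S : Connects src F₀ S := fun j hj => hcF₀ j (Finset.mem_insert_of_mem hj)
  have hne2 : (cs E' S).Nonempty := ⟨_, F₀, hF₀E', hcF₀S, rfl⟩
  have hsub1 : cs E' (insert i S) ⊆ cs E (insert i S) := by
    rintro x ⟨F, hF, hc, rfl⟩; exact ⟨F, hF.trans hE'E, hc, rfl⟩
  have hsub2 : cs E' S ⊆ cs E S := by
    rintro x ⟨F, hF, hc, rfl⟩; exact ⟨F, hF.trans hE'E, hc, rfl⟩
  have hsub3 : cs E' (insert i S) ⊆ cs E' S := by
    rintro x ⟨F, hF, hc, rfl⟩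
    exact ⟨F, hF, fun j hj => hc j (Finset.mem_insert_of_mem hj), rfl⟩
  have hEq : ∀ G X, connCost src w G X = sInf (cs G X) := fun G X => rfl
  have haa' : connCost src w E (insert i S) ≤ connCost src w E' (insert i S) :=
    csInf_le_csInf (hbdd E (Finset.Subset.refl _) _) hne1 hsub1
  have hbb' : connCost src w E S ≤ connCost src w E' S :=
    csInf_le_csInf (hbdd E (Finset.Subset.refl _) _) hne2 hsub2
  have hb'a' : connCost src w E' S ≤ connCost src w E' (insert i S) :=
    csInf_le_csInf (hbdd E' hE'E _) hne1 hsub3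
  -- key: b ≥ min b' a
  have hkey : min (connCost src w E' S) (connCost src w E (insert i S)) ≤
      connCost src w E S := by
    refine le_csInf (hne2.mono hsub2) ?_
    rintro x ⟨F, hFE, hcF, rfl⟩
    obtain ⟨T, hTF, hcT, hwT, halt⟩ := key_extract src i E E' hinc w hw S F hFE hcF
    rcases halt with hTE' | hreach
    · refine le_trans (min_le_left _ _) (le_trans (csInf_le (hbdd E' hE'E S) ?_) hwT)
      exact ⟨T, hTE', hcT, rfl⟩
    · refine le_trans (min_le_right _ _) (le_trans (csInf_le (hbdd E (Finset.Subset.refl _) _) ?_) hwT)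
      refine ⟨T, hTF.trans hFE, ?_, rfl⟩
      intro j hj
      rcases Finset.mem_insert.mp hj with rfl | hj
      · exact hreach
      · exact hcT j hj
  rcases le_total (connCost src w E' S) (connCost src w E (insert i S)) with h | h
  · rw [min_eq_left h] at hkey; linarith
  · rw [min_eq_right h] at hkey; linarith
end

section
/- Let V be a finite set of nodes with source s ∈ V, let w assign a nonnegative real cost to each edge (unordered pair of distinct nodes of V), let i ∈ V \ {s}, and let E' ⊆ E be two finite edge sets such that every edge of E \ E' is incident to i and the whole set V \ {s} is connectable within E'. Let N = V \ {s}, and let v_E and v_{E'} be the connection games given by v(∅)=0 and v(S) = C(S) for nonempty S, computed with edge sets E and E' respectively. Then φ_i(N, v_E) ≤ φ_i(N, v_{E'}): node i's Shapley cost share when all of its adjacent edges are available is at most its cost share after it cuts some of its adjacent edges (truthfulness of the average marginal cost mechanism). -/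
open Finset

/-- The connection game induced by edge set `E` with costs `w`:
`v(∅) = 0` and `v(S) = C_E(S)` for nonempty `S`. -/
noncomputable def connGame {α : Type*} [DecidableEq α] (src : α) (w : Sym2 α → ℝ)
    (E : Finset (Sym2 α)) (S : Finset α) : ℝ :=
  if S = ∅ then 0 else connCost src w E S

/-- Prune `F` to the edges all of whose endpoints lie in the component of `src`. -/
noncomputable def prune {α : Type*} (src : α) (F : Finset (Sym2 α)) : Finset (Sym2 α) :=
  @Finset.filter _
    (fun e => ∀ x ∈ e, (SimpleGraph.fromEdgeSet (↑F : Set (Sym2 α))).Reachable src x)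
    (Classical.decPred _) F

lemma mem_prune {α : Type*} {src : α} {F : Finset (Sym2 α)} {e : Sym2 α} :
    e ∈ prune src F ↔ e ∈ F ∧
      ∀ x ∈ e, (SimpleGraph.fromEdgeSet (↑F : Set (Sym2 α))).Reachable src x := by
  exact @Finset.mem_filter _ _ (Classical.decPred _) F e

lemma prune_subset {α : Type*} (src : α) (F : Finset (Sym2 α)) : prune src F ⊆ F := by
  intro e he
  exact (mem_prune.mp he).1

lemma reachable_prune {α : Type*} (src : α) (F : Finset (Sym2 α)) (j : α)
    (h : (SimpleGraph.fromEdgeSet (↑F : Set (Sym2 α))).Reachable src j) :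
    (SimpleGraph.fromEdgeSet (↑(prune src F) : Set (Sym2 α))).Reachable src j := by
  classical
  set G := SimpleGraph.fromEdgeSet (↑F : Set (Sym2 α)) with hG
  set G0 := SimpleGraph.fromEdgeSet (↑(prune src F) : Set (Sym2 α)) with hG0
  have key : ∀ a b : α, G.Walk a b → G.Reachable src a → G0.Reachable src a →
      G0.Reachable src b := by
    intro a b p
    induction p with
    | nil => intro _ h2; exact h2
    | @cons a c b hadj p ih =>
      intro h1 h2
      rw [hG, SimpleGraph.fromEdgeSet_adj] at hadj
      obtain ⟨hmem, hne⟩ := hadj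
      have hadj' : G.Adj a c := by
        rw [hG, SimpleGraph.fromEdgeSet_adj]; exact ⟨hmem, hne⟩
      have hc1 : G.Reachable src c := h1.trans hadj'.reachable
      have hepr : s(a, c) ∈ prune src F := by
        rw [mem_prune]
        refine ⟨hmem, ?_⟩
        intro x hx
        rw [Sym2.mem_iff] at hx
        rcases hx with rfl | rfl
        · exact h1
        · exact hc1
      have hadj0 : G0.Adj a c := by
        rw [hG0, SimpleGraph.fromEdgeSet_adj]
        exact ⟨by exact_mod_cast hepr, hne⟩
      exact ih hc1 (h2.trans hadj0.reachable)
  obtain ⟨p⟩ := h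
  exact key src j p (SimpleGraph.Reachable.refl src) (SimpleGraph.Reachable.refl src)

lemma mem_prune_reach {α : Type*} (src : α) (F : Finset (Sym2 α)) {e : Sym2 α} {x : α}
    (he : e ∈ prune src F) (hx : x ∈ e) :
    (SimpleGraph.fromEdgeSet (↑(prune src F) : Set (Sym2 α))).Reachable src x := by
  classical
  rw [mem_prune] at he
  exact reachable_prune src F x (he.2 x hx)

/-- The defining set of `connCost` is finite. -/
lemma connSet_finite {α : Type*} (src : α) (w : Sym2 α → ℝ)
    (E : Finset (Sym2 α)) (S : Finset α) :
    {x : ℝ | ∃ F ⊆ E, Connects src F S ∧ x = ∑ e ∈ F, w e}.Finite := by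
  classical
  apply Set.Finite.subset (E.powerset.image (fun F => ∑ e ∈ F, w e)).finite_toSet
  rintro x ⟨F, hFE, _, rfl⟩
  simp only [Finset.coe_image, Set.mem_image, Finset.mem_coe, Finset.mem_powerset]
  exact ⟨F, hFE, rfl⟩

lemma connSet_nonneg {α : Type*} {src : α} {w : Sym2 α → ℝ}
    {E : Finset (Sym2 α)} (hw : ∀ e ∈ E, 0 ≤ w e) (S : Finset α) :
    ∀ x ∈ {x : ℝ | ∃ F ⊆ E, Connects src F S ∧ x = ∑ e ∈ F, w e}, 0 ≤ x := by
  rintro x ⟨F, hFE, _, rfl⟩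
  exact Finset.sum_nonneg fun e he => hw e (hFE he)

lemma connCost_le {α : Type*} (src : α) (w : Sym2 α → ℝ)
    {E F : Finset (Sym2 α)} {S : Finset α}
    (hFE : F ⊆ E) (hF : Connects src F S) :
    connCost src w E S ≤ ∑ e ∈ F, w e :=
  csInf_le (connSet_finite src w E S).bddBelow ⟨F, hFE, hF, rfl⟩

lemma connCost_attained {α : Type*} (src : α) (w : Sym2 α → ℝ)
    {E : Finset (Sym2 α)} {S : Finset α}
    (hne : {x : ℝ | ∃ F ⊆ E, Connects src F S ∧ x = ∑ e ∈ F, w e}.Nonempty) :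
    ∃ F ⊆ E, Connects src F S ∧ connCost src w E S = ∑ e ∈ F, w e :=
  hne.csInf_mem (connSet_finite src w E S)

lemma connCost_mono {α : Type*} (src : α) (w : Sym2 α → ℝ)
    {E E' : Finset (Sym2 α)} {S T : Finset α}
    (hE : E' ⊆ E) (hST : S ⊆ T)
    (hne : {x : ℝ | ∃ F ⊆ E', Connects src F T ∧ x = ∑ e ∈ F, w e}.Nonempty) :
    connCost src w E S ≤ connCost src w E' T := by
  obtain ⟨F, hFE, hF, hval⟩ := connCost_attained src w hne
  rw [hval]
  exact connCost_le src w (hFE.trans hE) (fun j hj => hF j (hST hj))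

lemma connSet_nonempty {α : Type*} {src : α} (w : Sym2 α → ℝ)
    {E' E'' : Finset (Sym2 α)} {N S : Finset α}
    (hconn : Connectable src E' N) (hS : S ⊆ N) (hE : E' ⊆ E'') :
    {x : ℝ | ∃ F ⊆ E'', Connects src F S ∧ x = ∑ e ∈ F, w e}.Nonempty := by
  obtain ⟨F, hFE, hF⟩ := hconn
  exact ⟨∑ e ∈ F, w e, F, hFE.trans hE, fun j hj => hF j (hS hj), rfl⟩

lemma connCost_empty {α : Type*} (src : α) {w : Sym2 α → ℝ}
    {E : Finset (Sym2 α)} (hw : ∀ e ∈ E, 0 ≤ w e) :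
    connCost src w E ∅ = 0 := by
  apply le_antisymm
  · have : Connects src ∅ (∅ : Finset α) := fun j hj => absurd hj (Finset.notMem_empty j)
    simpa using connCost_le src w (Finset.empty_subset E) this
  · exact le_csInf ⟨0, ∅, Finset.empty_subset E,
      fun j hj => absurd hj (Finset.notMem_empty j), by simp⟩ (connSet_nonneg hw ∅)

lemma connGame_eq_connCost {α : Type*} [DecidableEq α] (src : α) {w : Sym2 α → ℝ}
    {E : Finset (Sym2 α)} (hw : ∀ e ∈ E, 0 ≤ w e) (S : Finset α) :
    connGame src w E S = connCost src w E S := by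
  rw [connGame]
  split
  · rename_i h; rw [h, connCost_empty src hw]
  · rfl

/-- The key pointwise inequality. -/
lemma key_ineq {α : Type*} [DecidableEq α]
    (V : Finset α) (src : α)
    (E E' : Finset (Sym2 α)) (hE'E : E' ⊆ E)
    (w : Sym2 α → ℝ) (hw : ∀ e ∈ E, 0 ≤ w e)
    (i : α) (hiV : i ∈ V \ {src})
    (hinc : ∀ e ∈ E \ E', i ∈ e)
    (hconn : Connectable src E' (V \ {src}))
    (S : Finset α) (hS : S ⊆ V \ {src}) :
    connCost src w E (insert i S) + connCost src w E' S ≤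
      connCost src w E' (insert i S) + connCost src w E S := by
  classical
  have hiS : insert i S ⊆ V \ {src} := Finset.insert_subset hiV hS
  -- minimal witness for (E, S)
  obtain ⟨F, hFE, hFconn, hFval⟩ :=
    connCost_attained src w (connSet_nonempty w hconn hS hE'E)
  set F₀ := prune src F with hF₀
  have hF₀F : F₀ ⊆ F := prune_subset src F
  have hF₀E : F₀ ⊆ E := hF₀F.trans hFE
  have hF₀conn : Connects src F₀ S := fun j hj => reachable_prune src F j (hFconn j hj)
  have hcost : ∑ e ∈ F₀, w e ≤ connCost src w E S := by
    rw [hFval]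
    exact Finset.sum_le_sum_of_subset_of_nonneg hF₀F
      (fun e he _ => hw e (hFE he))
  by_cases hD : ∀ e ∈ F₀, e ∈ E'
  · have h1 : connCost src w E' S ≤ connCost src w E S :=
      (connCost_le src w (fun e he => hD e he) hF₀conn).trans hcost
    have h2 : connCost src w E (insert i S) ≤ connCost src w E' (insert i S) :=
      connCost_mono src w hE'E (le_refl _) (connSet_nonempty w hconn hiS (le_refl _))
    linarith
  · push_neg at hD
    obtain ⟨e, heF₀, heE'⟩ := hD
    have hie : i ∈ e := hinc e (Finset.mem_sdiff.mpr ⟨hF₀E heF₀, heE'⟩)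
    have hreach : (SimpleGraph.fromEdgeSet (↑F₀ : Set (Sym2 α))).Reachable src i :=
      mem_prune_reach src F heF₀ hie
    have hF₀conn' : Connects src F₀ (insert i S) := by
      intro j hj
      rcases Finset.mem_insert.mp hj with rfl | hj
      · exact hreach
      · exact hF₀conn j hj
    have h1 : connCost src w E (insert i S) ≤ connCost src w E S :=
      (connCost_le src w hF₀E hF₀conn').trans hcost
    have h2 : connCost src w E' S ≤ connCost src w E' (insert i S) :=
      connCost_mono src w (le_refl _) (Finset.subset_insert i S)
        (connSet_nonempty w hconn hiS (le_refl _))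
    linarith

/-- Truthfulness of the average marginal cost mechanism: if node `i` cuts some
of its adjacent edges (shrinking the available edge set from `E` to `E' ⊆ E`,
where every deleted edge is incident to `i`) while all of `V \ {s}` remains
connectable within `E'`, then `i`'s Shapley cost share in the connection game
with edge set `E` is at most its share with edge set `E'`. -/
theorem amcm_truthful (α : Type*) [DecidableEq α]
    (V : Finset α) (src : α) (hsrc : src ∈ V)
    (E E' : Finset (Sym2 α)) (hE'E : E' ⊆ E)
    (hE : ∀ e ∈ E, ¬ e.IsDiag ∧ ∀ x ∈ e, x ∈ V)
    (w : Sym2 α → ℝ) (hw : ∀ e ∈ E, 0 ≤ w e)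
    (i : α) (hiV : i ∈ V \ {src})
    (hinc : ∀ e ∈ E \ E', i ∈ e)
    (hconn : Connectable src E' (V \ {src})) :
    shapley (V \ {src}) (connGame src w E) i ≤
      shapley (V \ {src}) (connGame src w E') i := by
  classical
  have hw' : ∀ e ∈ E', 0 ≤ w e := fun e he => hw e (hE'E he)
  rw [shapley, shapley]
  apply Finset.sum_le_sum
  intro S hS
  have hSsub : S ⊆ V \ {src} :=
    (Finset.mem_powerset.mp hS).trans (Finset.erase_subset i _)
  have hcoeff : (0:ℝ) ≤ ((S.card.factorial * ((V \ {src}).card - S.card - 1).factorial : ℝ)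
      / ((V \ {src}).card.factorial : ℝ)) := by positivity
  apply mul_le_mul_of_nonneg_left _ hcoeff
  have hkey := key_ineq V src E E' hE'E w hw i hiV hinc hconn S hSsub
  rw [connGame_eq_connCost src hw, connGame_eq_connCost src hw,
      connGame_eq_connCost src hw', connGame_eq_connCost src hw']
  linarith
end

section
/- Let V be a finite set of nodes with source s ∈ V, let E be a finite set of edges (unordered pairs of distinct nodes of V), and let i ∈ V \ {s}. Let w and w' be nonnegative real edge costs that agree on every edge except possibly one edge e₀ ∈ E incident to i, where w'(e₀) ≥ w(e₀). Suppose N = V \ {s} is nonempty and connectable within E, and let v and v' be the connection games (v(∅)=0, v(S) = connection cost of S) computed with costs w and w' respectively. Then φ_i(N, v') ≥ φ_i(N, v): increasing the cost of one of node i's adjacent edges weakly increases node i's Shapley cost share (cost monotonicity of the average marginal cost mechanism). -/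
open Finset

namespace AMCM

variable {α : Type*} [DecidableEq α]

lemma connects_mono {src : α} {F : Finset (Sym2 α)} {S T : Finset α}
    (h : Connects src F T) (hST : S ⊆ T) : Connects src F S :=
  fun j hj => h j (hST hj)

lemma connCost_set_finite (src : α) (w : Sym2 α → ℝ) (E : Finset (Sym2 α)) (S : Finset α) :
    {x : ℝ | ∃ F ⊆ E, Connects src F S ∧ x = ∑ e ∈ F, w e}.Finite := by
  apply Set.Finite.subset (E.powerset.image (fun F => ∑ e ∈ F, w e)).finite_toSet
  rintro x ⟨F, hFE, _, rfl⟩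
  simp only [coe_image, Set.mem_image, mem_coe, mem_powerset]
  exact ⟨F, hFE, rfl⟩

lemma connCost_le {src : α} {w : Sym2 α → ℝ} {E F : Finset (Sym2 α)} {S : Finset α}
    (hFE : F ⊆ E) (hF : Connects src F S) :
    connCost src w E S ≤ ∑ e ∈ F, w e :=
  csInf_le (connCost_set_finite src w E S).bddBelow ⟨F, hFE, hF, rfl⟩

lemma exists_min {src : α} (w : Sym2 α → ℝ) {E : Finset (Sym2 α)} {S : Finset α}
    (h : Connectable src E S) :
    ∃ F ⊆ E, Connects src F S ∧ connCost src w E S = ∑ e ∈ F, w e := by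
  obtain ⟨F, hFE, hF⟩ := h
  have hne : {x : ℝ | ∃ F ⊆ E, Connects src F S ∧ x = ∑ e ∈ F, w e}.Nonempty :=
    ⟨_, F, hFE, hF, rfl⟩
  exact hne.csInf_mem (connCost_set_finite src w E S)

lemma connCost_nonneg {src : α} {w : Sym2 α → ℝ} {E : Finset (Sym2 α)} {S : Finset α}
    (hw : ∀ e ∈ E, 0 ≤ w e) (h : Connectable src E S) :
    0 ≤ connCost src w E S := by
  obtain ⟨F, hFE, _, hval⟩ := exists_min w h
  rw [hval]
  exact Finset.sum_nonneg fun e he => hw e (hFE he)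

lemma connCost_empty {src : α} {w : Sym2 α → ℝ} {E : Finset (Sym2 α)}
    (hw : ∀ e ∈ E, 0 ≤ w e) : connCost src w E ∅ = 0 := by
  have hconn : Connects src (∅ : Finset (Sym2 α)) (∅ : Finset α) :=
    fun j hj => absurd hj (Finset.notMem_empty j)
  have h1 : connCost src w E ∅ ≤ 0 := by
    simpa using connCost_le (w := w) (Finset.empty_subset E) hconn
  have h2 : 0 ≤ connCost src w E ∅ :=
    connCost_nonneg hw ⟨∅, Finset.empty_subset E, hconn⟩
  linarith

lemma prune {src : α} {F : Finset (Sym2 α)} {S : Finset α} (hF : Connects src F S) :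
    ∃ F₁ ⊆ F, Connects src F₁ S ∧
      ∀ e ∈ F₁, ∀ x ∈ e, (SimpleGraph.fromEdgeSet (↑F₁ : Set (Sym2 α))).Reachable src x := by
  classical
  set G := SimpleGraph.fromEdgeSet (↑F : Set (Sym2 α)) with hG
  set F₁ := F.filter (fun e => ∀ x ∈ e, G.Reachable src x) with hF₁
  have key : ∀ (y : α) (p : G.Walk src y), ∀ e ∈ p.edges,
      e ∈ (SimpleGraph.fromEdgeSet (↑F₁ : Set (Sym2 α))).edgeSet := by
    intro y p e he
    have heG : e ∈ G.edgeSet := p.edges_subset_edgeSet he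
    rw [hG, SimpleGraph.edgeSet_fromEdgeSet] at heG
    rw [SimpleGraph.edgeSet_fromEdgeSet]
    obtain ⟨heF, hed⟩ := heG
    refine ⟨?_, hed⟩
    simp only [mem_coe, hF₁, Finset.mem_filter]
    refine ⟨heF, ?_⟩
    intro x hx
    have hxs : x ∈ p.support := by
      induction e using Sym2.ind with
      | _ a b =>
        rcases Sym2.mem_iff.mp hx with rfl | rfl
        · exact p.fst_mem_support_of_mem_edges he
        · exact p.snd_mem_support_of_mem_edges he
    exact ⟨p.takeUntil x hxs⟩
  have htrans : ∀ (y : α), G.Reachable src y →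
      (SimpleGraph.fromEdgeSet (↑F₁ : Set (Sym2 α))).Reachable src y := by
    rintro y ⟨p⟩
    exact ⟨p.transfer _ (key y p)⟩
  refine ⟨F₁, Finset.filter_subset _ _, fun j hj => htrans j (hF j hj), ?_⟩
  intro e he x hx
  exact htrans x ((Finset.mem_filter.mp he).2 x hx)


lemma submod {src : α} {E : Finset (Sym2 α)} {i : α}
    {w w' : Sym2 α → ℝ} (hw : ∀ e ∈ E, 0 ≤ w e) (hw' : ∀ e ∈ E, 0 ≤ w' e)
    {e₀ : Sym2 α} (he₀i : i ∈ e₀)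
    (hagree : ∀ e, e ≠ e₀ → w' e = w e) (hle : w e₀ ≤ w' e₀)
    {S : Finset α}
    (hS : Connectable src E S) (hSi : Connectable src E (insert i S)) :
    connCost src w E (insert i S) + connCost src w' E S ≤
      connCost src w' E (insert i S) + connCost src w E S := by
  classical
  obtain ⟨F', hF'E, hF'c, hF'v⟩ := exists_min w' hSi
  obtain ⟨G, hGE, hGc, hGv⟩ := exists_min w hS
  obtain ⟨F₁, hF₁F, hF₁c, hF₁r⟩ := prune hF'c
  obtain ⟨G₁, hG₁G, hG₁c, hG₁r⟩ := prune hGc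
  have hF₁E : F₁ ⊆ E := hF₁F.trans hF'E
  have hG₁E : G₁ ⊆ E := hG₁G.trans hGE
  -- sums over subsets
  have hF₁le : ∑ e ∈ F₁, w' e ≤ ∑ e ∈ F', w' e :=
    Finset.sum_le_sum_of_subset_of_nonneg hF₁F (fun e he _ => hw' e (hF'E he))
  have hG₁le : ∑ e ∈ G₁, w e ≤ ∑ e ∈ G, w e :=
    Finset.sum_le_sum_of_subset_of_nonneg hG₁G (fun e he _ => hw e (hGE he))
  have hGw' : ∑ e ∈ G, w' e ≤ ∑ e ∈ G, w e + (w' e₀ - w e₀) := by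
    by_cases hG0 : e₀ ∈ G
    · have : ∑ e ∈ G, (w' e - w e) = w' e₀ - w e₀ :=
        Finset.sum_eq_single_of_mem e₀ hG0 (fun b _ hb => by rw [hagree b hb]; ring)
      rw [Finset.sum_sub_distrib] at this
      linarith
    · have : ∑ e ∈ G, w' e = ∑ e ∈ G, w e :=
        Finset.sum_congr rfl (fun e he => hagree e (fun h => hG0 (h ▸ he)))
      linarith
  have hvS' : connCost src w' E S ≤ ∑ e ∈ G, w' e := connCost_le hGE hGc
  by_cases h0 : e₀ ∈ F₁
  · -- i is reachable in F₁, which connects insert i S already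
    have hsum : ∑ e ∈ F₁, (w' e - w e) = w' e₀ - w e₀ :=
      Finset.sum_eq_single_of_mem e₀ h0 (fun b _ hb => by rw [hagree b hb]; ring)
    rw [Finset.sum_sub_distrib] at hsum
    have h1 : connCost src w E (insert i S) ≤ ∑ e ∈ F₁, w e := connCost_le hF₁E hF₁c
    -- ∑ F₁ w = ∑ F₁ w' - Δ ≤ ∑ F' w' - Δ = v'(S∪i) - Δ
    rw [hF'v, hGv]
    linarith
  · have hF₁eq : ∑ e ∈ F₁, w' e = ∑ e ∈ F₁, w e :=
      Finset.sum_congr rfl (fun e he => hagree e (fun h => h0 (h ▸ he)))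
    by_cases h1 : e₀ ∈ G₁
    · -- G₁ connects insert i S
      have hiR : (SimpleGraph.fromEdgeSet (↑G₁ : Set (Sym2 α))).Reachable src i :=
        hG₁r e₀ h1 i he₀i
      have hG₁c' : Connects src G₁ (insert i S) := by
        intro j hj
        rcases Finset.mem_insert.mp hj with rfl | hj
        · exact hiR
        · exact hG₁c j hj
      have ha : connCost src w E (insert i S) ≤ ∑ e ∈ G₁, w e := connCost_le hG₁E hG₁c'
      have hb : connCost src w' E S ≤ ∑ e ∈ F₁, w' e :=
        connCost_le hF₁E (connects_mono hF₁c (Finset.subset_insert i S))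
      rw [hF'v, hGv]
      linarith
    · have hG₁eq : ∑ e ∈ G₁, w' e = ∑ e ∈ G₁, w e :=
        Finset.sum_congr rfl (fun e he => hagree e (fun h => h1 (h ▸ he)))
      have ha : connCost src w E (insert i S) ≤ ∑ e ∈ F₁, w e := connCost_le hF₁E hF₁c
      have hb : connCost src w' E S ≤ ∑ e ∈ G₁, w' e :=
        connCost_le hG₁E hG₁c
      rw [hF'v, hGv]
      linarith


end AMCM

open AMCM in
/-- Cost monotonicity of the average marginal cost mechanism: if the cost
functions `w` and `w'` agree on every edge except possibly one edge `e₀ ∈ E`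
incident to node `i`, where `w' e₀ ≥ w e₀`, then node `i`'s Shapley cost share
in the connection game weakly increases. -/
theorem amcm_cost_monotone (α : Type*) [DecidableEq α]
    (V : Finset α) (src : α) (hsrc : src ∈ V)
    (E : Finset (Sym2 α)) (hE : ∀ e ∈ E, ¬ e.IsDiag ∧ ∀ x ∈ e, x ∈ V)
    (i : α) (hiV : i ∈ V \ {src})
    (w w' : Sym2 α → ℝ) (hw : ∀ e ∈ E, 0 ≤ w e) (hw' : ∀ e ∈ E, 0 ≤ w' e)
    (e₀ : Sym2 α) (he₀E : e₀ ∈ E) (he₀i : i ∈ e₀)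
    (hagree : ∀ e, e ≠ e₀ → w' e = w e) (hle : w e₀ ≤ w' e₀)
    (hN : (V \ {src}).Nonempty)
    (hconn : Connectable src E (V \ {src})) :
    shapley (V \ {src}) (connGame src w E) i ≤
      shapley (V \ {src}) (connGame src w' E) i := by

  classical
  unfold shapley
  apply Finset.sum_le_sum
  intro S hS
  set N := V \ {src}
  have hiN : i ∈ N := hiV
  have hSN : S ⊆ N.erase i := Finset.mem_powerset.mp hS
  have hSsub : S ⊆ N := hSN.trans (Finset.erase_subset i N)
  have hiSsub : insert i S ⊆ N := Finset.insert_subset hiN hSsub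
  obtain ⟨F0, hF0E, hF0c⟩ := hconn
  have hSconn : Connectable src E S := ⟨F0, hF0E, AMCM.connects_mono hF0c hSsub⟩
  have hiSconn : Connectable src E (insert i S) := ⟨F0, hF0E, AMCM.connects_mono hF0c hiSsub⟩
  have hsub := AMCM.submod hw hw' he₀i hagree hle hSconn hiSconn
  have hins : insert i S ≠ ∅ := Finset.insert_ne_empty i S
  have hGwS : connGame src w E S = connCost src w E S := by
    by_cases h : S = ∅
    · subst h; simp [connGame, AMCM.connCost_empty hw]
    · simp [connGame, h]
  have hGw'S : connGame src w' E S = connCost src w' E S := by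
    by_cases h : S = ∅
    · subst h; simp [connGame, AMCM.connCost_empty hw']
    · simp [connGame, h]
  have hGwI : connGame src w E (insert i S) = connCost src w E (insert i S) := by
    simp [connGame, hins]
  have hGw'I : connGame src w' E (insert i S) = connCost src w' E (insert i S) := by
    simp [connGame, hins]
  rw [hGwS, hGw'S, hGwI, hGw'I]
  apply mul_le_mul_of_nonneg_left (by linarith)
  positivity
end

section
/- Let V be a finite set of nodes with source s ∈ V, let E be a finite set of edges (unordered pairs of distinct nodes of V) with nonnegative real costs w, and suppose the whole set N = V \ {s} is nonempty and connectable within E. Let v be the connection game given by v(∅)=0 and v(S) = C_E(S) for nonempty S ⊆ N. Then φ_i(N,v) ≥ 0 for every i ∈ N: every node's Shapley cost share in the average marginal cost mechanism is nonnegative (positiveness). -/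
open Finset

/-- Positiveness of the average marginal cost mechanism: if `N = V \ {s}` is
nonempty and connectable within `E`, every node's Shapley cost share in the
connection game is nonnegative. -/
theorem amcm_positive (α : Type*) [DecidableEq α]
    (V : Finset α) (src : α) (hsrc : src ∈ V)
    (E : Finset (Sym2 α)) (hE : ∀ e ∈ E, ¬ e.IsDiag ∧ ∀ x ∈ e, x ∈ V)
    (w : Sym2 α → ℝ) (hw : ∀ e ∈ E, 0 ≤ w e)
    (hN : (V \ {src}).Nonempty)
    (hconn : Connectable src E (V \ {src})) :
    ∀ i ∈ V \ {src}, 0 ≤ shapley (V \ {src}) (connGame src w E) i := by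
  intro i hi
  unfold shapley
  apply Finset.sum_nonneg
  intro S hS
  have hfac : (0:ℝ) ≤ ((S.card.factorial * ((V \ {src}).card - S.card - 1).factorial : ℝ) /
      ((V \ {src}).card.factorial : ℝ)) := by positivity
  apply mul_nonneg hfac
  rw [sub_nonneg]
  have hS' : S ⊆ (V \ {src}).erase i := Finset.mem_powerset.mp hS
  have hSN : S ⊆ V \ {src} := hS'.trans (Finset.erase_subset _ _)
  have hiS : insert i S ⊆ V \ {src} := Finset.insert_subset hi hSN
  -- nonemptiness of the cost set for any T ⊆ V \ {src}
  have hne : ∀ T : Finset α, T ⊆ V \ {src} →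
      {x : ℝ | ∃ F ⊆ E, Connects src F T ∧ x = ∑ e ∈ F, w e}.Nonempty := by
    intro T hT
    obtain ⟨F, hFE, hF⟩ := hconn
    exact ⟨∑ e ∈ F, w e, F, hFE, fun j hj => hF j (hT hj), rfl⟩
  have hbdd : ∀ T : Finset α,
      ∀ x ∈ {x : ℝ | ∃ F ⊆ E, Connects src F T ∧ x = ∑ e ∈ F, w e}, (0:ℝ) ≤ x := by
    rintro T x ⟨F, hFE, _, rfl⟩
    exact Finset.sum_nonneg fun e he => hw e (hFE he)
  rcases eq_or_ne S ∅ with rfl | hSne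
  · simp only [connGame, if_pos rfl, LawfulSingleton.insert_empty_eq]
    rw [if_neg (Finset.singleton_ne_empty i)]
    exact Real.sInf_nonneg (hbdd {i})
  · rw [connGame, connGame, if_neg hSne, if_neg (by simp [Finset.insert_ne_empty])]
    unfold connCost
    apply csInf_le_csInf ⟨0, hbdd S⟩ (hne _ hiS)
    rintro x ⟨F, hFE, hF, rfl⟩
    exact ⟨F, hFE, fun j hj => hF j (Finset.mem_insert_of_mem hj), rfl⟩
end
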